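/- Let α > 0 and let F : ℝ → ℝ be continuously differentiable on [0,∞) with F(t) > 0 for all t ≥ 0. Assume that the derivative t ↦ F'(t) is nondecreasing on [0,∞) and that t^α · F(t) → 1 as t → ∞. Then for every δ > 0 one has liminf_{t→∞} t^{α+1} · (−F'(t)) ≥ δ^{−1}·(1 − (1+δ)^{−α}). -/

import Mathlib

open Filter Set

/-- Lower-bound half of the proof of Lemma 3.5 (Asymptotic derivative):
for every `δ > 0`, `liminf_{t→∞} t^(α+1) * (-F' t) ≥ δ⁻¹ * (1 - (1+δ)^(-α))`. -/
theorem asymptotic_derivative_liminf (α : ℝ) (hα : 0 < α) (F F' : ℝ → ℝ)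
    (hderiv : ∀ t ∈ Ici (0:ℝ), HasDerivWithinAt F (F' t) (Ici 0) t)
    (hcont : ContinuousOn F' (Ici 0))
    (hpos : ∀ t ∈ Ici (0:ℝ), 0 < F t)
    (hmono : ∀ s ∈ Ici (0:ℝ), ∀ t ∈ Ici (0:ℝ), s ≤ t → F' s ≤ F' t)
    (hlim : Tendsto (fun t : ℝ => t ^ α * F t) atTop (nhds 1)) :
    ∀ δ : ℝ, 0 < δ →
      δ⁻¹ * (1 - (1 + δ) ^ (-α)) ≤ atTop.liminf (fun t : ℝ => t ^ (α + 1) * (-F' t)) := by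
  have hFc : ContinuousOn F (Ici 0) := fun t ht => (hderiv t ht).continuousWithinAt
  -- convexity inequality: F' a * (b - a) ≤ F b - F a
  have key : ∀ a, 0 ≤ a → ∀ b, a ≤ b → F' a * (b - a) ≤ F b - F a := by
    intro a ha b hab
    have hmonoG : MonotoneOn (fun x => F x - F' a * x) (Ici a) := by
      apply monotoneOn_of_hasDerivWithinAt_nonneg (convex_Ici a)
        (f' := fun x => F' x - F' a)
      · exact (hFc.mono (Ici_subset_Ici.2 ha)).sub
          (continuousOn_const.mul continuousOn_id)
      · intro x hx
        rw [interior_Ici] at hx ⊢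
        have hx0 : x ∈ Ici (0:ℝ) := le_trans ha hx.le
        have hsub : Ioi a ⊆ Ici (0:ℝ) := fun y hy => le_trans ha (le_of_lt hy)
        have := ((hderiv x hx0).mono hsub).sub
          (((hasDerivWithinAt_id x (Ioi a)).const_mul (F' a)))
        simp only [mul_one] at this; exact this
      · intro x hx
        rw [interior_Ici] at hx
        have hx0 : x ∈ Ici (0:ℝ) := le_trans ha hx.le
        exact sub_nonneg.2 (hmono a ha x hx0 hx.le)
    have h := hmonoG self_mem_Ici (mem_Ici.2 hab) hab
    simp only at h
    nlinarith [h]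
  -- other side: F b - F a ≤ F' b * (b - a)
  have key2 : ∀ a, 0 ≤ a → ∀ b, a ≤ b → F b - F a ≤ F' b * (b - a) := by
    intro a ha b hab
    have hsub : Icc a b ⊆ Ici (0:ℝ) := fun y hy => le_trans ha hy.1
    have hmonoG : MonotoneOn (fun x => F' b * x - F x) (Icc a b) := by
      apply monotoneOn_of_hasDerivWithinAt_nonneg (convex_Icc a b)
        (f' := fun x => F' b - F' x)
      · exact (continuousOn_const.mul continuousOn_id).sub (hFc.mono hsub)
      · intro x hx
        rw [interior_Icc] at hx ⊢
        have hx0 : x ∈ Ici (0:ℝ) := le_trans ha hx.1.le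
        have hsub2 : Ioo a b ⊆ Ici (0:ℝ) := fun y hy => le_trans ha hy.1.le
        have := (((hasDerivWithinAt_id x (Ioo a b)).const_mul (F' b))).sub
          ((hderiv x hx0).mono hsub2)
        simp only [mul_one] at this; exact this
      · intro x hx
        rw [interior_Icc] at hx
        have hx0 : x ∈ Ici (0:ℝ) := le_trans ha hx.1.le
        exact sub_nonneg.2 (hmono x hx0 b (le_trans ha hab) hx.2.le)
    have h := hmonoG (left_mem_Icc.2 hab) (right_mem_Icc.2 hab) hab
    simp only at h
    nlinarith [h]
  -- F tends to 0 at infinity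
  have hFtop : Tendsto F atTop (nhds 0) := by
    have h1 : Tendsto (fun t : ℝ => t ^ (-α) * (t ^ α * F t)) atTop (nhds (0 * 1)) :=
      (tendsto_rpow_neg_atTop hα).mul hlim
    rw [zero_mul] at h1
    apply h1.congr'
    filter_upwards [eventually_gt_atTop (0:ℝ)] with t ht
    have hne : t ^ α ≠ 0 := (Real.rpow_pos_of_pos ht α).ne'
    rw [Real.rpow_neg ht.le]
    field_simp
  -- F' is negative on [0, ∞)
  have hF'neg : ∀ t, 0 ≤ t → F' t < 0 := by
    intro t ht
    obtain ⟨b, hb1, hb2⟩ :=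
      ((hFtop.eventually_lt_const (hpos t ht)).and (eventually_gt_atTop t)).exists
    have hk := key t ht b hb2.le
    nlinarith
  intro δ hδ
  have h1δ : (0:ℝ) < 1 + δ := by linarith
  -- the comparison function and its limit
  set g : ℝ → ℝ := fun t =>
    δ⁻¹ * (t ^ α * F t - (1 + δ) ^ (-α) * ((t * (1 + δ)) ^ α * F (t * (1 + δ)))) with hgdef
  have htmul : Tendsto (fun t : ℝ => t * (1 + δ)) atTop atTop :=
    tendsto_id.atTop_mul_const h1δ
  have hcompm : Tendsto (fun t : ℝ => (t * (1 + δ)) ^ α * F (t * (1 + δ))) atTop (nhds 1) :=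
    hlim.comp htmul
  have hg : Tendsto g atTop (nhds (δ⁻¹ * (1 - (1 + δ) ^ (-α) * 1))) :=
    (hlim.sub (hcompm.const_mul _)).const_mul _
  -- eventual lower bound : g t ≤ t^(α+1) * (-F' t)
  have hlb : ∀ᶠ t in atTop, g t ≤ t ^ (α + 1) * (-F' t) := by
    filter_upwards [eventually_gt_atTop (0:ℝ)] with t ht
    have ht0 : (0:ℝ) ≤ t := ht.le
    have hle : t ≤ t * (1 + δ) := by nlinarith
    have hk := key t ht0 (t * (1 + δ)) hle
    have hrw : (t * (1 + δ)) ^ α = t ^ α * (1 + δ) ^ α :=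
      Real.mul_rpow ht0 h1δ.le
    have hinv : (1 + δ) ^ (-α) * (1 + δ) ^ α = 1 := by
      rw [← Real.rpow_add h1δ]; simp
    have hpow : t ^ (α + 1) = t ^ α * t := by
      rw [Real.rpow_add ht, Real.rpow_one]
    have htα : (0:ℝ) ≤ t ^ α := (Real.rpow_pos_of_pos ht α).le
    have h2 : t ^ α * (F t - F (t * (1 + δ))) ≤ t ^ α * ((-F' t) * (t * δ)) := by
      apply mul_le_mul_of_nonneg_left _ htα
      nlinarith
    rw [hgdef]
    simp only
    rw [hrw, hpow]
    have hδ' : (0:ℝ) < δ⁻¹ := inv_pos.2 hδ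
    calc δ⁻¹ * (t ^ α * F t - (1 + δ) ^ (-α) * (t ^ α * (1 + δ) ^ α * F (t * (1 + δ))))
        = δ⁻¹ * (t ^ α * (F t - F (t * (1 + δ)))) := by
          have : (1 + δ) ^ (-α) * (t ^ α * (1 + δ) ^ α * F (t * (1 + δ)))
              = t ^ α * F (t * (1 + δ)) := by
            linear_combination (t ^ α * F (t * (1 + δ))) * hinv
          rw [this]; ring
      _ ≤ δ⁻¹ * (t ^ α * ((-F' t) * (t * δ))) := by
          exact mul_le_mul_of_nonneg_left h2 hδ'.le
      _ = t ^ α * t * (-F' t) := by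
          field_simp
  -- eventual upper bound (for coboundedness)
  have hcompd : Tendsto (fun t : ℝ => (t / (1 + δ)) ^ α * F (t / (1 + δ))) atTop (nhds 1) :=
    hlim.comp (tendsto_id.atTop_div_const h1δ)
  have hub : ∀ᶠ t in atTop,
      t ^ (α + 1) * (-F' t) ≤ (1 + δ) / δ * ((1 + δ) ^ α * 2) := by
    filter_upwards [eventually_gt_atTop (0:ℝ),
      hcompd.eventually_le_const (by norm_num : (1:ℝ) < 2)] with t ht hst
    have hs0 : (0:ℝ) < t / (1 + δ) := div_pos ht h1δ
    have hsle : t / (1 + δ) ≤ t := by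
      rw [div_le_iff₀ h1δ]; nlinarith
    have hk := key2 (t / (1 + δ)) hs0.le t hsle
    have hFs : 0 < F (t / (1 + δ)) := hpos _ hs0.le
    have hFt : 0 < F t := hpos _ ht.le
    have hrw : t ^ α = (1 + δ) ^ α * (t / (1 + δ)) ^ α := by
      rw [← Real.mul_rpow h1δ.le hs0.le]
      congr 1
      field_simp
    have hpow : t ^ (α + 1) = t ^ α * t := by
      rw [Real.rpow_add ht, Real.rpow_one]
    have htα : (0:ℝ) ≤ t ^ α := (Real.rpow_pos_of_pos ht α).le
    have hts : t - t / (1 + δ) = t * δ / (1 + δ) := by field_simp; ring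
    -- (-F' t) * (t - s) ≤ F s - F t ≤ F s
    have h3 : (-F' t) * (t - t / (1 + δ)) ≤ F (t / (1 + δ)) := by nlinarith
    have h4 : t ^ α * ((-F' t) * (t - t / (1 + δ)))
        ≤ t ^ α * F (t / (1 + δ)) := mul_le_mul_of_nonneg_left h3 htα
    have hF't : F' t < 0 := hF'neg t ht.le
    have h5 : t ^ α * F (t / (1 + δ))
        ≤ (1 + δ) ^ α * 2 := by
      rw [hrw]
      have hpα : (0:ℝ) < (1 + δ) ^ α := Real.rpow_pos_of_pos h1δ α
      calc (1 + δ) ^ α * (t / (1 + δ)) ^ α * F (t / (1 + δ))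
          = (1 + δ) ^ α * ((t / (1 + δ)) ^ α * F (t / (1 + δ))) := by ring
        _ ≤ (1 + δ) ^ α * 2 := mul_le_mul_of_nonneg_left hst hpα.le
    have heq : t ^ α * t * (-F' t)
        = (1 + δ) / δ * (t ^ α * ((-F' t) * (t - t / (1 + δ)))) := by
      rw [hts]; field_simp
    rw [hpow, heq]
    have hq : (0:ℝ) < (1 + δ) / δ := div_pos h1δ hδ
    calc (1 + δ) / δ * (t ^ α * ((-F' t) * (t - t / (1 + δ))))
        ≤ (1 + δ) / δ * (t ^ α * F (t / (1 + δ))) :=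
          mul_le_mul_of_nonneg_left h4 hq.le
      _ ≤ (1 + δ) / δ * ((1 + δ) ^ α * 2) := mul_le_mul_of_nonneg_left h5 hq.le
  have hcob : atTop.IsCoboundedUnder (· ≥ ·) (fun t : ℝ => t ^ (α + 1) * (-F' t)) :=
    isCoboundedUnder_ge_of_eventually_le atTop hub
  have hbdd : atTop.IsBoundedUnder (· ≥ ·) g := hg.isBoundedUnder_ge
  have : δ⁻¹ * (1 - (1 + δ) ^ (-α)) = δ⁻¹ * (1 - (1 + δ) ^ (-α) * 1) := by ring
  rw [this, ← hg.liminf_eq]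
  exact liminf_le_liminf hlb hbdd hcob
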